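/- Let P ⊆ ℝ² be a finite point set, let T₀ be a minimum spanning tree of P, and for 1 ≤ j ≤ i let T_j be a spanning tree of P of minimum total Euclidean edge length among spanning trees edge-disjoint from T₀ ∪ … ∪ T_{j−1} (assuming such spanning trees exist). Let P' be the set of points of P incident to at least one edge of T_i of length at least 1. Then every closed disc of radius 1/4 contains at most 720·i³ points of P' (for i ≥ 1), i.e., O(i³) points. -/

import Mathlib

open scoped Classical
noncomputable section

/-- A point in the Euclidean plane. -/
abbrev Point : Type := EuclideanSpace ℝ (Fin 2)

/-- A link is an ordered pair (sender, receiver) of points. -/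
abbrev Link : Type := Point × Point

/-- The length of a link: the distance from its sender to its receiver. -/
def linkLen (l : Link) : ℝ := dist l.1 l.2

/-- The set `S` of links satisfies all the SINR constraints under the power
assignment `Pw` (path-loss exponent `α`, SINR threshold `β`, noise ignored). -/
def FeasibleWith (α β : ℝ) (S : Finset Link) (Pw : Link → ℝ) : Prop :=
  ∀ l ∈ S, β * ∑ l' ∈ S.erase l, Pw l' / dist l'.1 l.2 ^ α ≤ Pw l / linkLen l ^ α

/-- A set of links is feasible if some positive power assignment satisfies all
its SINR constraints. -/
def Feasible (α β : ℝ) (S : Finset Link) : Prop :=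
  ∃ Pw : Link → ℝ, (∀ l ∈ S, 0 < Pw l) ∧ FeasibleWith α β S Pw

/-- `S` is a partition of the link set `L` into `k` (possibly empty) sets. -/
def IsPartition (L : Finset Link) {k : ℕ} (S : Fin k → Finset Link) : Prop :=
  (∀ i, S i ⊆ L) ∧ (∀ l ∈ L, ∃ i, l ∈ S i) ∧
    ∀ i j : Fin k, i ≠ j → Disjoint (S i) (S j)

/-- Total Euclidean edge length of a graph on the point set `P`. -/
def treeWeight (P : Finset Point) (T : SimpleGraph ↥P) : ℝ :=
  (1 / 2) * ∑ p ∈ P.attach, ∑ q ∈ P.attach,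
    if T.Adj p q then dist (p : Point) (q : Point) else 0

/-- `T` is a minimum spanning tree of `P`: a spanning tree of the complete
graph on `P` of minimum total Euclidean edge length. -/
def IsMST (P : Finset Point) (T : SimpleGraph ↥P) : Prop :=
  T.IsTree ∧ ∀ T' : SimpleGraph ↥P, T'.IsTree → treeWeight P T ≤ treeWeight P T'

/-- `L` is an orientation of the edges of `T` into links: every link of `L`
is an oriented edge of `T`, and every edge of `T` appears in exactly one of
its two orientations. -/
def IsOrientationOf (P : Finset Point) (T : SimpleGraph ↥P) (L : Finset Link) : Prop :=
  (∀ l ∈ L, ∃ p q : ↥P, T.Adj p q ∧ l = ((p : Point), (q : Point))) ∧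
  (∀ p q : ↥P, T.Adj p q →
    (((p : Point), (q : Point)) ∈ L ∨ ((q : Point), (p : Point)) ∈ L)) ∧
  (∀ p q : ↥P, T.Adj p q →
    ¬((((p : Point), (q : Point)) ∈ L) ∧ (((q : Point), (p : Point)) ∈ L)))


namespace MSTAux

open SimpleGraph

open SimpleGraph

variable {V : Type*}

lemma isAcyclic_mono {G H : SimpleGraph V} (h : H ≤ G) (hG : G.IsAcyclic) : H.IsAcyclic :=
  fun _v c hc => hG (c.mapLe h) (hc.mapLe h)

lemma reach_or_aux {T : SimpleGraph V} {a b : V} :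
    ∀ {v w : V}, T.Walk v w →
      ((T.deleteEdges {s(a, b)}).Reachable w a ∨ (T.deleteEdges {s(a, b)}).Reachable w b) →
      (T.deleteEdges {s(a, b)}).Reachable v a ∨ (T.deleteEdges {s(a, b)}).Reachable v b := by
  intro v w p
  induction p with
  | nil => exact id
  | @cons x y z h q ih =>
    intro hw
    by_cases he : s(x, y) = s(a, b)
    · rcases Sym2.eq_iff.mp he with ⟨rfl, rfl⟩ | ⟨rfl, rfl⟩
      · exact Or.inl (Reachable.refl _)
      · exact Or.inr (Reachable.refl _)
    · have hxy : (T.deleteEdges {s(a, b)}).Adj x y := by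
        simp only [deleteEdges_adj, Set.mem_singleton_iff]
        exact ⟨h, he⟩
      rcases ih hw with h1 | h1
      · exact Or.inl (hxy.reachable.trans h1)
      · exact Or.inr (hxy.reachable.trans h1)

lemma reach_or {T : SimpleGraph V} {a b : V} {v : V} (p : T.Walk v a) :
    (T.deleteEdges {s(a, b)}).Reachable v a ∨ (T.deleteEdges {s(a, b)}).Reachable v b :=
  reach_or_aux p (Or.inl (Reachable.refl _))

lemma swap_isTree {T : SimpleGraph V} (hT : T.IsTree) {a b x y : V}
    (hab : T.Adj a b) (hxy : x ≠ y)
    (hnR : ¬(T.deleteEdges {s(a, b)}).Reachable x y) :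
    ((T.deleteEdges {s(a, b)}) ⊔ fromEdgeSet {s(x, y)}).IsTree := by
  set D := T.deleteEdges {s(a, b)} with hD
  set T' := D ⊔ fromEdgeSet {s(x, y)} with hT'def
  have hDle : D ≤ T' := le_sup_left
  have hadjxy : T'.Adj x y := by
    refine Or.inr ?_
    rw [fromEdgeSet_adj]
    exact ⟨rfl, hxy⟩
  have hreach : ∀ v : V, D.Reachable v a ∨ D.Reachable v b := by
    intro v
    exact reach_or (hT.isConnected.preconnected v a).some
  constructor
  · -- connectivity
    have key : ∀ v : V, T'.Reachable v x := by
      intro v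
      rcases hreach x with hxa | hxb
      · rcases hreach y with hya | hyb
        · exact absurd (hxa.trans hya.symm) hnR
        · rcases hreach v with hva | hvb
          · exact (hva.mono hDle).trans (hxa.mono hDle).symm
          · exact ((hvb.mono hDle).trans (hyb.mono hDle).symm).trans hadjxy.symm.reachable
      · rcases hreach y with hya | hyb
        · rcases hreach v with hva | hvb
          · exact ((hva.mono hDle).trans (hya.mono hDle).symm).trans hadjxy.symm.reachable
          · exact (hvb.mono hDle).trans (hxb.mono hDle).symm
        · exact absurd (hxb.trans hyb.symm) hnR
    have hne : Nonempty V := hT.isConnected.nonempty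
    rw [connected_iff]
    exact ⟨fun u v => (key u).trans (key v).symm, hne⟩
  · -- acyclicity
    intro v c hc
    by_cases hxyc : s(x, y) ∈ c.edges
    · have hcyc := (adj_and_reachable_delete_edges_iff_exists_cycle (G := T')).mpr ⟨v, c, hc, hxyc⟩
      refine hnR (hcyc.2.mono ?_)
      intro u w huw
      have h1 : T'.Adj u w ∧ ¬(fromEdgeSet {s(x, y)} : SimpleGraph V).Adj u w := huw
      rcases h1.1 with h2 | h2
      · exact h2
      · exact absurd h2 h1.2
    · have hsub : ∀ e ∈ c.edges, e ∈ T.edgeSet := by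
        intro e he
        have hmem : e ∈ T'.edgeSet := c.edges_subset_edgeSet he
        rw [hT'def, edgeSet_sup, hD, edgeSet_deleteEdges, edgeSet_fromEdgeSet] at hmem
        rcases hmem with h1 | h1
        · exact h1.1
        · exact absurd (h1.1 ▸ he) hxyc
      exact hT.IsAcyclic (c.transfer T hsub) (hc.transfer hsub)

lemma path_cut {T : SimpleGraph V} (hT : T.IsTree) {x y : V} (w : T.Walk x y)
    (hw : w.IsPath) {f : Sym2 V} (hf : f ∈ w.edges) :
    ¬(T.deleteEdges {f}).Reachable x y := by
  rintro ⟨w'⟩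
  have hsub : ∀ e ∈ w'.edges, e ∈ T.edgeSet := by
    intro e he
    have := w'.edges_subset_edgeSet he
    rw [edgeSet_deleteEdges] at this
    exact this.1
  have hp2 : ((w'.transfer T hsub).bypass).IsPath := Walk.bypass_isPath _
  have heq : (w'.transfer T hsub).bypass = w := (hT.existsUnique_path x y).unique hp2 hw
  have hfe : f ∈ ((w'.transfer T hsub).bypass).edges := heq ▸ hf
  have hf2 : f ∈ (w'.transfer T hsub).edges := Walk.edges_bypass_subset _ hfe
  rw [Walk.edges_transfer] at hf2
  have := w'.edges_subset_edgeSet hf2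
  rw [edgeSet_deleteEdges] at this
  exact this.2 rfl

lemma forest_pairs_aux [Fintype V] :
    ∀ (n : ℕ) (G : SimpleGraph V), G.IsAcyclic → G.edgeSet.ncard ≤ n →
      ∀ X : Finset V, ((X ×ˢ X).filter fun pq => G.Adj pq.1 pq.2).card ≤ 2 * (X.card - 1) := by
  intro n
  induction n with
  | zero =>
    intro G hG hcard X
    have h0 : G.edgeSet = ∅ := (Set.ncard_eq_zero (Set.toFinite _)).mp (Nat.le_zero.mp hcard)
    have : ((X ×ˢ X).filter fun pq => G.Adj pq.1 pq.2) = ∅ := by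
      refine Finset.filter_eq_empty_iff.mpr ?_
      intro pq _hpq hadj
      have : s(pq.1, pq.2) ∈ G.edgeSet := hadj
      rw [h0] at this
      exact this
    simp [this]
  | succ n ih =>
    intro G hG hcard X
    by_cases hne : ((X ×ˢ X).filter fun pq => G.Adj pq.1 pq.2).Nonempty
    swap
    · simp [Finset.not_nonempty_iff_eq_empty.mp hne]
    obtain ⟨⟨a, b⟩, hmem⟩ := hne
    rw [Finset.mem_filter, Finset.mem_product] at hmem
    obtain ⟨⟨ha, hb⟩, hab⟩ := hmem
    set G' := G.deleteEdges {s(a, b)} with hG'def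
    have hG' : G'.IsAcyclic := isAcyclic_mono (deleteEdges_le _) hG
    have hfe : s(a, b) ∈ G.edgeSet := hab
    have hcard' : G'.edgeSet.ncard ≤ n := by
      have h1 : G'.edgeSet = G.edgeSet \ {s(a, b)} := edgeSet_deleteEdges _
      have h2 := Set.ncard_diff_singleton_add_one hfe (Set.toFinite _)
      rw [h1]
      omega
    have hbridge : ¬G'.Reachable a b :=
      ((isBridge_iff).mp (isAcyclic_iff_forall_adj_isBridge.mp hG hab))
    set Xa := X.filter (fun v => G'.Reachable v a) with hXadef
    set Xb := X \ Xa with hXbdef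
    have hXa : a ∈ Xa := Finset.mem_filter.mpr ⟨ha, Reachable.refl _⟩
    have hXb : b ∈ Xb := by
      rw [hXbdef, Finset.mem_sdiff, hXadef, Finset.mem_filter]
      exact ⟨hb, fun h => hbridge (h.2).symm⟩
    have hsubset : (X ×ˢ X).filter (fun pq => G.Adj pq.1 pq.2) ⊆
        ((Xa ×ˢ Xa).filter fun pq => G'.Adj pq.1 pq.2) ∪
        ((Xb ×ˢ Xb).filter fun pq => G'.Adj pq.1 pq.2) ∪ {(a, b), (b, a)} := by
      rintro ⟨p, q⟩ hpq
      rw [Finset.mem_filter, Finset.mem_product] at hpq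
      obtain ⟨⟨hp, hq⟩, hadj⟩ := hpq
      by_cases hfpq : s(p, q) = s(a, b)
      · rcases Sym2.eq_iff.mp hfpq with ⟨rfl, rfl⟩ | ⟨rfl, rfl⟩
        · simp
        · simp
      · have hadj' : G'.Adj p q := by
          simp only [hG'def, deleteEdges_adj, Set.mem_singleton_iff]
          exact ⟨hadj, hfpq⟩
        by_cases hpa : G'.Reachable p a
        · have hqa : G'.Reachable q a := hadj'.symm.reachable.trans hpa
          refine Finset.mem_union_left _ (Finset.mem_union_left _ ?_)
          rw [Finset.mem_filter, Finset.mem_product]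
          exact ⟨⟨Finset.mem_filter.mpr ⟨hp, hpa⟩, Finset.mem_filter.mpr ⟨hq, hqa⟩⟩, hadj'⟩
        · have hqa : ¬G'.Reachable q a := fun h => hpa (hadj'.reachable.trans h)
          refine Finset.mem_union_left _ (Finset.mem_union_right _ ?_)
          rw [Finset.mem_filter, Finset.mem_product]
          refine ⟨⟨?_, ?_⟩, hadj'⟩
          · rw [hXbdef, Finset.mem_sdiff, hXadef, Finset.mem_filter]
            exact ⟨hp, fun h => hpa h.2⟩
          · rw [hXbdef, Finset.mem_sdiff, hXadef, Finset.mem_filter]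
            exact ⟨hq, fun h => hqa h.2⟩
    have hcardXa : 1 ≤ Xa.card := Finset.card_pos.mpr ⟨a, hXa⟩
    have hcardXb : 1 ≤ Xb.card := Finset.card_pos.mpr ⟨b, hXb⟩
    have hsum : Xa.card + Xb.card = X.card := by
      have hle : Xa.card ≤ X.card := Finset.card_le_card (by rw [hXadef]; exact Finset.filter_subset _ _)
      rw [hXbdef, Finset.card_sdiff_of_subset (by rw [hXadef]; exact Finset.filter_subset _ _)]
      omega
    have h1 := ih G' hG' hcard' Xa
    have h2 := ih G' hG' hcard' Xb
    calc ((X ×ˢ X).filter fun pq => G.Adj pq.1 pq.2).card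
        ≤ (((Xa ×ˢ Xa).filter fun pq => G'.Adj pq.1 pq.2) ∪
            ((Xb ×ˢ Xb).filter fun pq => G'.Adj pq.1 pq.2) ∪ {(a, b), (b, a)}).card :=
          Finset.card_le_card hsubset
      _ ≤ (((Xa ×ˢ Xa).filter fun pq => G'.Adj pq.1 pq.2) ∪
            ((Xb ×ˢ Xb).filter fun pq => G'.Adj pq.1 pq.2)).card + ({(a, b), (b, a)} : Finset (V × V)).card :=
          Finset.card_union_le _ _
      _ ≤ (((Xa ×ˢ Xa).filter fun pq => G'.Adj pq.1 pq.2).card +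
            ((Xb ×ˢ Xb).filter fun pq => G'.Adj pq.1 pq.2).card) + ({(a, b), (b, a)} : Finset (V × V)).card := by
          have := Finset.card_union_le ((Xa ×ˢ Xa).filter fun pq => G'.Adj pq.1 pq.2)
            ((Xb ×ˢ Xb).filter fun pq => G'.Adj pq.1 pq.2)
          omega
      _ ≤ 2 * (Xa.card - 1) + 2 * (Xb.card - 1) + 2 := by
          have hpair : ({(a, b), (b, a)} : Finset (V × V)).card ≤ 2 :=
            Finset.card_insert_le _ _ |>.trans (by simp)
          have h1' : ((Xa ×ˢ Xa).filter fun pq => G'.Adj pq.1 pq.2).card ≤ 2 * (Xa.card - 1) := by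
            convert h1 using 3
          have h2' : ((Xb ×ˢ Xb).filter fun pq => G'.Adj pq.1 pq.2).card ≤ 2 * (Xb.card - 1) := by
            convert h2 using 3
          omega
      _ ≤ 2 * (X.card - 1) := by omega

lemma forest_pairs [Fintype V] (G : SimpleGraph V) (hG : G.IsAcyclic) (X : Finset V) :
    ((X ×ˢ X).filter fun pq => G.Adj pq.1 pq.2).card ≤ 2 * (X.card - 1) :=
  forest_pairs_aux G.edgeSet.ncard G hG le_rfl X


lemma sqrt_le_of_sq {t I : ℝ} (hI : 0 ≤ I) (h : t ^ 2 ≤ I ^ 2) : t ≤ I := by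
  nlinarith [sq_nonneg (I - t), sq_nonneg (I + t)]

lemma oct_core {x1 y1 x2 y2 : ℝ} (h1 : 0 ≤ y1) (h2 : y1 ≤ x1) (h3 : 0 ≤ y2) (h4 : y2 ≤ x2) :
    Real.sqrt 2 / 2 * (Real.sqrt (x1 ^ 2 + y1 ^ 2) * Real.sqrt (x2 ^ 2 + y2 ^ 2)) ≤
      x1 * x2 + y1 * y2 := by
  have hA := Real.sq_sqrt (show (0:ℝ) ≤ x1 ^ 2 + y1 ^ 2 by positivity)
  have hB := Real.sq_sqrt (show (0:ℝ) ≤ x2 ^ 2 + y2 ^ 2 by positivity)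
  have hs := Real.sq_sqrt (show (0:ℝ) ≤ 2 by norm_num)
  have hI0 : 0 ≤ x1 * x2 + y1 * y2 := by nlinarith
  refine sqrt_le_of_sq hI0 ?_
  have hL : (Real.sqrt 2 / 2 * (Real.sqrt (x1 ^ 2 + y1 ^ 2) * Real.sqrt (x2 ^ 2 + y2 ^ 2))) ^ 2 =
      Real.sqrt 2 ^ 2 / 4 * (Real.sqrt (x1 ^ 2 + y1 ^ 2) ^ 2 * Real.sqrt (x2 ^ 2 + y2 ^ 2) ^ 2) := by
    ring
  rw [hL, hA, hB, hs]
  nlinarith [mul_nonneg (mul_nonneg (mul_nonneg (le_trans h1 h2) (le_trans h3 h4)) h1) h3,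
    mul_nonneg (sub_nonneg.mpr (mul_self_le_mul_self h1 h2)) (sub_nonneg.mpr (mul_self_le_mul_self h3 h4))]

lemma sign_mul {x y : ℝ} (h : (0 ≤ x) ↔ (0 ≤ y)) : x * y = |x| * |y| := by
  rcases le_or_gt 0 x with hx | hx
  · rw [abs_of_nonneg hx, abs_of_nonneg (h.mp hx)]
  · have hy : y < 0 := by
      by_contra h'
      push_neg at h'
      exact absurd (h.mpr h') (not_le.mpr hx)
    rw [abs_of_neg hx, abs_of_neg hy]
    ring

lemma oct_inner {zx zy wx wy : ℝ} (h1 : (0 ≤ zx) ↔ (0 ≤ wx)) (h2 : (0 ≤ zy) ↔ (0 ≤ wy))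
    (h3 : (|zy| ≤ |zx|) ↔ (|wy| ≤ |wx|)) :
    Real.sqrt 2 / 2 * (Real.sqrt (zx ^ 2 + zy ^ 2) * Real.sqrt (wx ^ 2 + wy ^ 2)) ≤
      zx * wx + zy * wy := by
  have e1 : zx * wx = |zx| * |wx| := sign_mul h1
  have e2 : zy * wy = |zy| * |wy| := sign_mul h2
  have ez : zx ^ 2 + zy ^ 2 = |zx| ^ 2 + |zy| ^ 2 := by rw [sq_abs, sq_abs]
  have ew : wx ^ 2 + wy ^ 2 = |wx| ^ 2 + |wy| ^ 2 := by rw [sq_abs, sq_abs]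
  rw [e1, e2, ez, ew]
  by_cases h : |zy| ≤ |zx|
  · exact oct_core (abs_nonneg _) h (abs_nonneg _) (h3.mp h)
  · push_neg at h
    have h' : ¬(|wy| ≤ |wx|) := fun hw => absurd (h3.mpr hw) (not_le.mpr h)
    push_neg at h'
    have := oct_core (abs_nonneg zx) h.le (abs_nonneg wx) h'.le
    calc Real.sqrt 2 / 2 * (Real.sqrt (|zx| ^ 2 + |zy| ^ 2) * Real.sqrt (|wx| ^ 2 + |wy| ^ 2))
        = Real.sqrt 2 / 2 * (Real.sqrt (|zy| ^ 2 + |zx| ^ 2) * Real.sqrt (|wy| ^ 2 + |wx| ^ 2)) := by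
          rw [add_comm (|zx| ^ 2), add_comm (|wx| ^ 2)]
      _ ≤ |zy| * |wy| + |zx| * |wx| := this
      _ = |zx| * |wx| + |zy| * |wy| := by ring

lemma dist_coord (a b : Point) :
    dist a b = Real.sqrt ((a 0 - b 0) ^ 2 + (a 1 - b 1) ^ 2) := by
  rw [EuclideanSpace.dist_eq]
  congr 1
  rw [Fin.sum_univ_two]
  simp [Real.dist_eq, sq_abs]

/-- The octant (relative to center `c`) in which point `u` lies. -/
def octc (u c : Point) : Bool × Bool × Bool :=
  (decide (0 ≤ u 0 - c 0), decide (0 ≤ u 1 - c 1), decide (|u 1 - c 1| ≤ |u 0 - c 0|))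

lemma sqrt2_ge : (1.41 : ℝ) ≤ Real.sqrt 2 := by
  have hs := Real.sq_sqrt (show (0:ℝ) ≤ 2 by norm_num)
  nlinarith [Real.sqrt_nonneg 2]

lemma scalar1 {A B I2 : ℝ} (hA34 : 3 / 4 ≤ A) (hAB : A ≤ B) (hc : B ≤ 5 / 4)
    (hI : 1.41 * (A * B) ≤ I2) : A ^ 2 + B ^ 2 - I2 < 1 := by
  nlinarith [mul_nonneg (sub_nonneg.mpr hA34) (sub_nonneg.mpr hAB),
    mul_nonneg (sub_nonneg.mpr hAB) (sub_nonneg.mpr hc),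
    mul_nonneg (sub_nonneg.mpr hA34) (sub_nonneg.mpr hc),
    sq_nonneg (B - A), sq_nonneg (A - 3 / 4)]

lemma scalar2 {A B I2 : ℝ} (hA34 : 3 / 4 ≤ A) (hAB : A ≤ B) (hc : 5 / 4 ≤ B)
    (hI : 1.41 * (A * B) ≤ I2) : A ^ 2 + B ^ 2 - I2 < (B - 1 / 4) ^ 2 := by
  nlinarith [mul_nonneg (sub_nonneg.mpr hA34) (sub_nonneg.mpr hc),
    mul_nonneg (sub_nonneg.mpr hA34) (sub_nonneg.mpr hAB),
    sq_nonneg (A - 3 / 4), mul_nonneg (sub_nonneg.mpr hAB) (sub_nonneg.mpr hc)]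

lemma geom_aux {c p q u v : Point} (hoct : octc u c = octc v c)
    (hp : dist p c ≤ 1 / 4) (hq : dist q c ≤ 1 / 4)
    (hpu : 1 ≤ dist p u) (hqv : 1 ≤ dist q v)
    (hAB : dist u c ≤ dist v c) : dist u v < dist q v := by
  have hA : dist u c = Real.sqrt ((u 0 - c 0) ^ 2 + (u 1 - c 1) ^ 2) := dist_coord u c
  have hB : dist v c = Real.sqrt ((v 0 - c 0) ^ 2 + (v 1 - c 1) ^ 2) := dist_coord v c
  have hD : dist u v =
      Real.sqrt (((u 0 - c 0) - (v 0 - c 0)) ^ 2 + ((u 1 - c 1) - (v 1 - c 1)) ^ 2) := by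
    rw [dist_coord u v]
    congr 1
    ring
  have hA0 : (0:ℝ) ≤ dist u c := dist_nonneg
  have hB0 : (0:ℝ) ≤ dist v c := dist_nonneg
  have hA34 : 3 / 4 ≤ dist u c := by
    have h1 := dist_triangle p c u
    have h2 : dist c u = dist u c := dist_comm c u
    linarith
  have hB34 : 3 / 4 ≤ dist v c := by
    have h1 := dist_triangle q c v
    have h2 : dist c v = dist v c := dist_comm c v
    linarith
  have hRqv1 : dist v c - 1 / 4 ≤ dist q v := by
    have h1 := dist_triangle v q c
    have h2 : dist v q = dist q v := dist_comm v q
    linarith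
  have e1 : (0 ≤ u 0 - c 0) ↔ (0 ≤ v 0 - c 0) := by
    have h := congrArg (·.1) hoct
    simp only [octc] at h
    rw [sub_nonneg, sub_nonneg]
    simpa [decide_eq_decide, sub_nonneg] using h
  have e2 : (0 ≤ u 1 - c 1) ↔ (0 ≤ v 1 - c 1) := by
    have h := congrArg (·.2.1) hoct
    simp only [octc] at h
    rw [sub_nonneg, sub_nonneg]
    simpa [decide_eq_decide, sub_nonneg] using h
  have e3 : (|u 1 - c 1| ≤ |u 0 - c 0|) ↔ (|v 1 - c 1| ≤ |v 0 - c 0|) := by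
    have h := congrArg (·.2.2) hoct
    simp only [octc] at h
    simpa [decide_eq_decide] using h
  have hinner : Real.sqrt 2 / 2 * (dist u c * dist v c) ≤
      (u 0 - c 0) * (v 0 - c 0) + (u 1 - c 1) * (v 1 - c 1) := by
    rw [hA, hB]
    exact oct_inner e1 e2 e3
  have hzsq : (u 0 - c 0) ^ 2 + (u 1 - c 1) ^ 2 = dist u c ^ 2 := by
    rw [hA, Real.sq_sqrt (by positivity)]
  have hwsq : (v 0 - c 0) ^ 2 + (v 1 - c 1) ^ 2 = dist v c ^ 2 := by
    rw [hB, Real.sq_sqrt (by positivity)]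
  have hD2 : (dist u v) ^ 2 = dist u c ^ 2 + dist v c ^ 2 -
      2 * ((u 0 - c 0) * (v 0 - c 0) + (u 1 - c 1) * (v 1 - c 1)) := by
    rw [hD, Real.sq_sqrt (by positivity)]
    linear_combination hzsq + hwsq
  have hABnn : 0 ≤ dist u c * dist v c := mul_nonneg hA0 hB0
  have hinner' : 1.41 * (dist u c * dist v c) ≤
      2 * ((u 0 - c 0) * (v 0 - c 0) + (u 1 - c 1) * (v 1 - c 1)) := by
    have h1 : (1.41 : ℝ) * (dist u c * dist v c) ≤ Real.sqrt 2 * (dist u c * dist v c) :=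
      mul_le_mul_of_nonneg_right sqrt2_ge hABnn
    linarith
  suffices hlt : dist u v < max 1 (dist v c - 1 / 4) by
    exact lt_of_lt_of_le hlt (max_le hqv hRqv1)
  have hRpos : (0 : ℝ) ≤ max 1 (dist v c - 1 / 4) := le_trans zero_le_one (le_max_left _ _)
  refine lt_of_pow_lt_pow_left₀ 2 hRpos ?_
  rcases le_total (dist v c) (5 / 4) with hc' | hc'
  · have hmax : max 1 (dist v c - 1 / 4) = 1 := max_eq_left (by linarith)
    rw [hmax, hD2, one_pow]
    have := scalar1 hA34 hAB hc' hinner'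
    linarith
  · have hmax : max 1 (dist v c - 1 / 4) = dist v c - 1 / 4 := max_eq_right (by linarith)
    rw [hmax, hD2]
    have := scalar2 hA34 hAB hc' hinner'
    linarith

lemma geom_main {c p q u v : Point} (hoct : octc u c = octc v c)
    (hp : dist p c ≤ 1 / 4) (hq : dist q c ≤ 1 / 4)
    (hpu : 1 ≤ dist p u) (hqv : 1 ≤ dist q v) :
    dist u v < max (dist p u) (dist q v) := by
  rcases le_total (dist u c) (dist v c) with h | h
  · exact lt_of_lt_of_le (geom_aux hoct hp hq hpu hqv h) (le_max_right _ _)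
  · have := geom_aux hoct.symm hq hp hqv hpu h
    rw [dist_comm v u] at this
    exact lt_of_lt_of_le this (le_max_left _ _)


lemma pair_ind_sum (P : Finset Point) (r s : ↥P) (K : ℝ) :
    (∑ pq ∈ P.attach ×ˢ P.attach, if pq = (r, s) then K else 0) = K := by
  rw [Finset.sum_eq_single ((r, s) : ↥P × ↥P)]
  · simp
  · intro b _hb hbne
    simp [hbne]
  · intro h
    exact absurd (Finset.mem_product.mpr ⟨Finset.mem_attach _ _, Finset.mem_attach _ _⟩) h

lemma swap_weight (P : Finset Point) {G G' : SimpleGraph ↥P} {a b x y : ↥P}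
    (hab : G.Adj a b) (hxy : x ≠ y) (hxyE : s(x, y) ∉ G.edgeSet)
    (hG'def : G' = G.deleteEdges {s(a, b)} ⊔ fromEdgeSet {s(x, y)}) :
    treeWeight P G' =
      treeWeight P G - dist (a : Point) (b : Point) + dist (x : Point) (y : Point) := by
  have hnab : a ≠ b := hab.ne
  have hsne : s(a, b) ≠ s(x, y) := fun h => hxyE (h ▸ (show s(a,b) ∈ G.edgeSet from hab))
  have hG'adj : ∀ p q : ↥P, G'.Adj p q ↔
      ((G.Adj p q ∧ s(p, q) ≠ s(a, b)) ∨ (s(p, q) = s(x, y) ∧ p ≠ q)) := by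
    intro p q
    rw [hG'def, sup_adj, deleteEdges_adj, fromEdgeSet_adj]
    simp [Set.mem_singleton_iff]
  have key : ∀ pq : ↥P × ↥P,
      (if G'.Adj pq.1 pq.2 then dist (pq.1 : Point) (pq.2 : Point) else 0) =
      (if G.Adj pq.1 pq.2 then dist (pq.1 : Point) (pq.2 : Point) else 0)
      - ((if pq = (a, b) then dist (a : Point) (b : Point) else 0)
         + (if pq = (b, a) then dist (a : Point) (b : Point) else 0))
      + ((if pq = (x, y) then dist (x : Point) (y : Point) else 0)
         + (if pq = (y, x) then dist (x : Point) (y : Point) else 0)) := by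
    rintro ⟨p, q⟩
    simp only
    by_cases h1 : s(p, q) = s(a, b)
    · -- the removed edge
      have hGpq : G.Adj p q := by
        rcases Sym2.eq_iff.mp h1 with ⟨rfl, rfl⟩ | ⟨rfl, rfl⟩
        · exact hab
        · exact hab.symm
      have hnG' : ¬G'.Adj p q := by
        rw [hG'adj]
        rintro (⟨_, h⟩ | ⟨h, _⟩)
        · exact h h1
        · exact hsne (h1.symm.trans h)
      have hxy1 : (p, q) ≠ (x, y) := by
        rintro ⟨⟩
        exact hsne (h1.symm)
      have hxy2 : (p, q) ≠ (y, x) := by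
        rintro ⟨⟩
        exact hsne (h1.symm.trans (Sym2.eq_swap))
      rcases Sym2.eq_iff.mp h1 with ⟨rfl, rfl⟩ | ⟨rfl, rfl⟩
      · rw [if_neg hnG', if_pos hGpq, if_pos rfl, if_neg (by simp [hnab]), if_neg hxy1,
          if_neg hxy2]
        ring
      · rw [if_neg hnG', if_pos hGpq, if_neg (by simp [hnab.symm] : ¬((p,q) = (q, p))), if_pos rfl, if_neg hxy1,
          if_neg hxy2]
        rw [dist_comm (q : Point) (p : Point)]
        ring
    · by_cases h2 : s(p, q) = s(x, y)
      · -- the added edge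
        have hnpq : p ≠ q := by
          rcases Sym2.eq_iff.mp h2 with ⟨rfl, rfl⟩ | ⟨rfl, rfl⟩
          · exact hxy
          · exact hxy.symm
        have hnG : ¬G.Adj p q := fun h => hxyE (h2 ▸ (show s(p,q) ∈ G.edgeSet from h))
        have hG'pq : G'.Adj p q := (hG'adj p q).mpr (Or.inr ⟨h2, hnpq⟩)
        have hab1 : (p, q) ≠ (a, b) := by
          rintro ⟨⟩
          exact h1 rfl
        have hab2 : (p, q) ≠ (b, a) := by
          rintro ⟨⟩
          exact h1 Sym2.eq_swap.symm
        rcases Sym2.eq_iff.mp h2 with ⟨rfl, rfl⟩ | ⟨rfl, rfl⟩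
        · rw [if_pos hG'pq, if_neg hnG, if_neg hab1, if_neg hab2, if_pos rfl,
            if_neg (by simp [hxy] : ¬((p, q) = (q, p)))]
          ring
        · rw [if_pos hG'pq, if_neg hnG, if_neg hab1, if_neg hab2,
            if_neg (by simp [hxy.symm] : ¬((p, q) = (q, p))), if_pos rfl]
          rw [dist_comm (q : Point) (p : Point)]
          ring
      · -- untouched pair
        have hGG' : G'.Adj p q ↔ G.Adj p q := by
          rw [hG'adj]
          constructor
          · rintro (⟨h, _⟩ | ⟨h, _⟩)
            · exact h
            · exact absurd h h2
          · intro h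
            exact Or.inl ⟨h, h1⟩
        have hab1 : (p, q) ≠ (a, b) := by
          rintro ⟨⟩
          exact h1 rfl
        have hab2 : (p, q) ≠ (b, a) := by
          rintro ⟨⟩
          exact h1 Sym2.eq_swap.symm
        have hxy1 : (p, q) ≠ (x, y) := by
          rintro ⟨⟩
          exact h2 rfl
        have hxy2 : (p, q) ≠ (y, x) := by
          rintro ⟨⟩
          exact h2 Sym2.eq_swap.symm
        rw [if_neg hab1, if_neg hab2, if_neg hxy1, if_neg hxy2]
        by_cases h : G.Adj p q
        · rw [if_pos h, if_pos (hGG'.mpr h)]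
          ring
        · rw [if_neg h, if_neg (fun h' => h (hGG'.mp h'))]
          ring
  have hconv : ∀ H : SimpleGraph ↥P, treeWeight P H =
      (1 / 2) * ∑ pq ∈ P.attach ×ˢ P.attach,
        (if H.Adj pq.1 pq.2 then dist (pq.1 : Point) (pq.2 : Point) else 0) := by
    intro H
    rw [treeWeight, Finset.sum_product]
  have hsum : (∑ pq ∈ P.attach ×ˢ P.attach,
      (if G'.Adj pq.1 pq.2 then dist (pq.1 : Point) (pq.2 : Point) else 0)) =
      ∑ pq ∈ P.attach ×ˢ P.attach,
      ((if G.Adj pq.1 pq.2 then dist (pq.1 : Point) (pq.2 : Point) else 0)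
      - ((if pq = (a, b) then dist (a : Point) (b : Point) else 0)
         + (if pq = (b, a) then dist (a : Point) (b : Point) else 0))
      + ((if pq = (x, y) then dist (x : Point) (y : Point) else 0)
         + (if pq = (y, x) then dist (x : Point) (y : Point) else 0))) :=
    Finset.sum_congr rfl (fun pq _ => key pq)
  have hsplit : ∑ pq ∈ P.attach ×ˢ P.attach,
      ((if G.Adj pq.1 pq.2 then dist (pq.1 : Point) (pq.2 : Point) else 0)
      - ((if pq = (a, b) then dist (a : Point) (b : Point) else 0)
         + (if pq = (b, a) then dist (a : Point) (b : Point) else 0))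
      + ((if pq = (x, y) then dist (x : Point) (y : Point) else 0)
         + (if pq = (y, x) then dist (x : Point) (y : Point) else 0))) =
      (∑ pq ∈ P.attach ×ˢ P.attach,
        (if G.Adj pq.1 pq.2 then dist (pq.1 : Point) (pq.2 : Point) else 0))
      - 2 * dist (a : Point) (b : Point) + 2 * dist (x : Point) (y : Point) := by
    simp only [Finset.sum_add_distrib, Finset.sum_sub_distrib, pair_ind_sum]
    ring
  rw [hconv G', hconv G]
  refine Eq.trans (congrArg (fun z : ℝ => 1 / 2 * z) (hsum.trans hsplit)) ?_
  ring


end MSTAux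


/-- let `T 0` be a minimum spanning tree of `P` and, for
`1 ≤ j ≤ i`, let `T j` be a minimum-weight spanning tree among those
edge-disjoint from `T 0, …, T (j-1)`. Then every closed disc of radius `1/4`
contains at most `720·i³` points of `P` incident to an edge of `T i` of
length at least `1`. -/

theorem few_points_in_disc_for_iterated_mst (P : Finset Point) (i : ℕ) (hi : 1 ≤ i)
    (T : ℕ → SimpleGraph ↥P) (hT0 : IsMST P (T 0))
    (hTj : ∀ j : ℕ, 1 ≤ j → j ≤ i →
      (T j).IsTree ∧
      (∀ a b : ↥P, (T j).Adj a b → ∀ j' < j, ¬(T j').Adj a b) ∧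
      (∀ T' : SimpleGraph ↥P, T'.IsTree →
        (∀ a b : ↥P, T'.Adj a b → ∀ j' < j, ¬(T j').Adj a b) →
        treeWeight P (T j) ≤ treeWeight P T'))
    (c : Point) :
    (P.attach.filter (fun p : ↥P =>
        dist (p : Point) c ≤ 1 / 4 ∧
        ∃ q : ↥P, (T i).Adj p q ∧ 1 ≤ dist (p : Point) (q : Point))).card ≤
      720 * i ^ 3 := by
  obtain ⟨hTiTree, hTiDisj, hTiMin⟩ := hTj i hi le_rfl
  have htree : ∀ j, j ≤ i → (T j).IsTree := by
    intro j hj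
    rcases Nat.eq_zero_or_pos j with rfl | hj1
    · exact hT0.1
    · exact (hTj j hj1 hj).1
  -- The exchange lemma.
  have EX : ∀ a b x y : ↥P, (T i).Adj a b → x ≠ y → (∀ j, j ≤ i → ¬(T j).Adj x y) →
      ¬((T i).deleteEdges {s(a, b)}).Reachable x y →
      dist (a : Point) (b : Point) ≤ dist (x : Point) (y : Point) := by
    intro a b x y hab hxy hunused hnR
    have hxyE : s(x, y) ∉ (T i).edgeSet := fun h => hunused i le_rfl h
    have htree' := MSTAux.swap_isTree hTiTree hab hxy hnR
    have hdisj' : ∀ u v : ↥P,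
        ((T i).deleteEdges {s(a, b)} ⊔ SimpleGraph.fromEdgeSet {s(x, y)}).Adj u v →
        ∀ j' < i, ¬(T j').Adj u v := by
      intro u v huv j' hj'
      rcases huv with h1 | h1
      · exact hTiDisj u v h1.1 j' hj'
      · rw [SimpleGraph.fromEdgeSet_adj] at h1
        have h2 := Set.mem_singleton_iff.mp h1.1
        rcases Sym2.eq_iff.mp h2 with ⟨rfl, rfl⟩ | ⟨rfl, rfl⟩
        · exact hunused j' (le_of_lt hj')
        · exact fun hadj => hunused j' (le_of_lt hj') hadj.symm
    have hw := hTiMin _ htree' hdisj'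
    rw [MSTAux.swap_weight P hab hxy hxyE rfl] at hw
    linarith
  set S := P.attach.filter (fun p : ↥P =>
      dist (p : Point) c ≤ 1 / 4 ∧
      ∃ q : ↥P, (T i).Adj p q ∧ 1 ≤ dist (p : Point) (q : Point)) with hSdef
  -- the far endpoint of a long edge at p
  set u : ↥P → ↥P := fun p =>
    if h : ∃ q : ↥P, (T i).Adj p q ∧ 1 ≤ dist (p : Point) (q : Point) then h.choose else p
    with hudef
  have hmemS : ∀ p ∈ S, dist (p : Point) c ≤ 1 / 4 ∧
      ∃ q : ↥P, (T i).Adj p q ∧ 1 ≤ dist (p : Point) (q : Point) :=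
    fun p hp => (Finset.mem_filter.mp hp).2
  have hu12 : ∀ p ∈ S, (T i).Adj p (u p) ∧ 1 ≤ dist (p : Point) (u p : Point) := by
    intro p hp
    have h := (hmemS p hp).2
    rw [hudef]
    simp only [h, dif_pos]
    exact h.choose_spec
  have hu1 : ∀ p ∈ S, (T i).Adj p (u p) := fun p hp => (hu12 p hp).1
  have hu2 : ∀ p ∈ S, 1 ≤ dist (p : Point) (u p : Point) := fun p hp => (hu12 p hp).2
  have hSc : ∀ p ∈ S, dist (p : Point) c ≤ 1 / 4 := fun p hp => (hmemS p hp).1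
  have hdistS : ∀ p q : ↥P, p ∈ S → q ∈ S → dist (p : Point) (q : Point) ≤ 1 / 2 := by
    intro p q hp hq
    have h1 := dist_triangle (p : Point) c (q : Point)
    have h2 : dist c (q : Point) = dist (q : Point) c := dist_comm _ _
    have := hSc p hp
    have := hSc q hq
    linarith
  set elen : Sym2 ↥P → ℝ :=
    Sym2.lift ⟨fun a b => dist (a : Point) (b : Point), fun a b => dist_comm _ _⟩ with helen
  set longSet : Set (Sym2 ↥P) := {e | 1 ≤ elen e} with hlongdef
  have hlongmem : ∀ a b : ↥P, s(a, b) ∈ longSet ↔ 1 ≤ dist (a : Point) (b : Point) := by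
    intro a b
    rw [hlongdef, helen]
    simp
  set Short := (T i).deleteEdges longSet with hShortdef
  -- C1 : non-used pairs in S are connected through short edges
  have hshortreach : ∀ p q : ↥P, p ∈ S → q ∈ S → (∀ j, j ≤ i → ¬(T j).Adj p q) →
      Short.Reachable p q := by
    intro p q hp hq hunused
    by_cases hpq : p = q
    · subst hpq
      exact SimpleGraph.Reachable.refl _
    obtain ⟨w0⟩ := hTiTree.isConnected.preconnected p q
    have hw : w0.bypass.IsPath := SimpleGraph.Walk.bypass_isPath _
    have hedges : ∀ e ∈ w0.bypass.edges, e ∉ longSet := by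
      intro e
      induction e using Sym2.ind with
      | _ a0 b0 =>
        intro he hlong
        have hadj := w0.bypass.adj_of_mem_edges he
        have hnr := MSTAux.path_cut hTiTree w0.bypass hw he
        have hle := EX a0 b0 p q hadj hpq hunused hnr
        have h12 := hdistS p q hp hq
        have := (hlongmem a0 b0).mp hlong
        linarith
    exact ⟨w0.bypass.toDeleteEdges longSet hedges⟩
  -- distinctness of the long edges
  have hne_edge : ∀ p q : ↥P, p ∈ S → q ∈ S → p ≠ q → s(p, u p) ≠ s(q, u q) := by
    intro p q hp hq hpq heq
    rcases Sym2.eq_iff.mp heq with ⟨h1, _⟩ | ⟨h1, _⟩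
    · exact hpq h1
    · have h2 := hu2 q hq
      rw [← h1] at h2
      have h3 : dist (q : Point) (p : Point) ≤ 1 / 2 :=
        le_trans (le_of_eq (dist_comm _ _)) (hdistS p q hp hq)
      linarith
  have hbridge : ∀ p ∈ S, ¬((T i).deleteEdges {s(p, u p)}).Reachable p (u p) :=
    fun p hp =>
      (SimpleGraph.isBridge_iff.mp (SimpleGraph.isAcyclic_iff_forall_adj_isBridge.mp hTiTree.IsAcyclic (hu1 p hp)))
  have hShortle : ∀ p ∈ S, Short ≤ (T i).deleteEdges {s(p, u p)} := by
    intro p hp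
    apply SimpleGraph.deleteEdges_anti
    intro e he
    rw [Set.mem_singleton_iff] at he
    subst he
    exact (hlongmem p (u p)).mpr (hu2 p hp)
  have huinj : ∀ p q : ↥P, p ∈ S → q ∈ S → p ≠ q → Short.Reachable p q → u p ≠ u q := by
    intro p q hp hq hpq hreach hequ
    have h1 : ((T i).deleteEdges {s(p, u p)}).Reachable p q := hreach.mono (hShortle p hp)
    have h2 : ((T i).deleteEdges {s(p, u p)}).Adj q (u q) := by
      rw [SimpleGraph.deleteEdges_adj]
      exact ⟨hu1 q hq, by
        rw [Set.mem_singleton_iff]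
        exact fun h => hne_edge p q hp hq hpq h.symm⟩
    exact hbridge p hp (h1.trans (hequ ▸ h2.reachable))
  -- same class and same octant implies the far endpoints are adjacent in some T j
  have key1 : ∀ p q : ↥P, p ∈ S → q ∈ S → p ≠ q → Short.Reachable p q →
      MSTAux.octc ((u p : Point)) c = MSTAux.octc ((u q : Point)) c →
      ∃ j, j ≤ i ∧ (T j).Adj (u p) (u q) := by
    intro p q hp hq hpq hreach hoct
    by_contra hcon
    push_neg at hcon
    have hcon' : ∀ j, j ≤ i → ¬(T j).Adj (u p) (u q) := hcon
    have hneq : u p ≠ u q := huinj p q hp hq hpq hreach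
    have hq_uq : ((T i).deleteEdges {s(p, u p)}).Adj q (u q) := by
      rw [SimpleGraph.deleteEdges_adj]
      exact ⟨hu1 q hq, by
        rw [Set.mem_singleton_iff]
        exact fun h => hne_edge p q hp hq hpq h.symm⟩
    have hp_q : ((T i).deleteEdges {s(p, u p)}).Reachable p q := hreach.mono (hShortle p hp)
    have hnR1 : ¬((T i).deleteEdges {s(p, u p)}).Reachable (u p) (u q) := by
      intro h
      exact hbridge p hp ((hp_q.trans hq_uq.reachable).trans h.symm)
    have hlen1 := EX p (u p) (u p) (u q) (hu1 p hp) hneq hcon' hnR1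
    have hp_up : ((T i).deleteEdges {s(q, u q)}).Adj p (u p) := by
      rw [SimpleGraph.deleteEdges_adj]
      exact ⟨hu1 p hp, by
        rw [Set.mem_singleton_iff]
        exact fun h => hne_edge p q hp hq hpq h⟩
    have hq_p : ((T i).deleteEdges {s(q, u q)}).Reachable p q := hreach.mono (hShortle q hq)
    have hnR2 : ¬((T i).deleteEdges {s(q, u q)}).Reachable (u p) (u q) := by
      intro h
      exact hbridge q hq ((hq_p.symm.trans hp_up.reachable).trans h)
    have hlen2 := EX q (u q) (u p) (u q) (hu1 q hq) hneq hcon' hnR2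
    have hgeo := MSTAux.geom_main hoct (hSc p hp) (hSc q hq) (hu2 p hp) (hu2 q hq)
    have hmax : max (dist (p : Point) (u p : Point)) (dist (q : Point) (u q : Point)) ≤
        dist (u p : Point) (u q : Point) := max_le hlen1 hlen2
    linarith
  -- ordered-pair counting tools
  have hpairs_card : ∀ (X : Finset ↥P),
      ((X ×ˢ X).filter fun pq => pq.1 ≠ pq.2).card = X.card * (X.card - 1) := by
    intro X
    rw [Finset.card_filter, Finset.sum_product]
    have hrow : ∀ p ∈ X, (∑ q ∈ X, if p ≠ q then 1 else 0) = X.card - 1 := by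
      intro p hp
      rw [← Finset.card_filter]
      have : X.filter (fun q => p ≠ q) = X.erase p := by
        ext q
        rw [Finset.mem_filter, Finset.mem_erase]
        constructor
        · rintro ⟨h1, h2⟩
          exact ⟨fun h => h2 h.symm, h1⟩
        · rintro ⟨h1, h2⟩
          exact ⟨h2, fun h => h1 h.symm⟩
      rw [this, Finset.card_erase_of_mem hp]
    rw [Finset.sum_congr rfl hrow, Finset.sum_const, smul_eq_mul]
  have hused : ∀ X : Finset ↥P,
      (∀ x y : ↥P, x ∈ X → y ∈ X → x ≠ y → ∃ j, j ≤ i ∧ (T j).Adj x y) →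
      X.card * (X.card - 1) ≤ (i + 1) * (2 * (X.card - 1)) := by
    intro X hall
    have hsub : (X ×ˢ X).filter (fun pq => pq.1 ≠ pq.2) ⊆
        (Finset.range (i + 1)).biUnion
          (fun j => (X ×ˢ X).filter fun pq => (T j).Adj pq.1 pq.2) := by
      rintro ⟨x, y⟩ hm
      rw [Finset.mem_filter, Finset.mem_product] at hm
      obtain ⟨j, hj, hadj⟩ := hall x y hm.1.1 hm.1.2 hm.2
      refine Finset.mem_biUnion.mpr ⟨j, Finset.mem_range.mpr (Nat.lt_succ_of_le hj), ?_⟩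
      rw [Finset.mem_filter, Finset.mem_product]
      exact ⟨hm.1, hadj⟩
    calc X.card * (X.card - 1)
        = ((X ×ˢ X).filter fun pq => pq.1 ≠ pq.2).card := (hpairs_card X).symm
      _ ≤ ((Finset.range (i + 1)).biUnion
            (fun j => (X ×ˢ X).filter fun pq => (T j).Adj pq.1 pq.2)).card :=
          Finset.card_le_card hsub
      _ ≤ ∑ j ∈ Finset.range (i + 1),
            ((X ×ˢ X).filter fun pq => (T j).Adj pq.1 pq.2).card :=
          Finset.card_biUnion_le
      _ ≤ ∑ _j ∈ Finset.range (i + 1), 2 * (X.card - 1) := by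
          refine Finset.sum_le_sum ?_
          intro j hj
          exact MSTAux.forest_pairs (T j)
            (htree j (Nat.lt_succ_iff.mp (Finset.mem_range.mp hj))).IsAcyclic X
      _ = (i + 1) * (2 * (X.card - 1)) := by
          rw [Finset.sum_const, Finset.card_range, smul_eq_mul]
  have hclique : ∀ X : Finset ↥P,
      (∀ x y : ↥P, x ∈ X → y ∈ X → x ≠ y → ∃ j, j ≤ i ∧ (T j).Adj x y) →
      X.card ≤ 2 * i + 2 := by
    intro X hall
    have h1 := hused X hall
    by_contra hcon
    push_neg at hcon
    have h2 : (2 * i + 3) * (X.card - 1) ≤ X.card * (X.card - 1) :=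
      Nat.mul_le_mul_right _ (by omega)
    have h3 : (i + 1) * (2 * (X.card - 1)) = (2 * i + 2) * (X.card - 1) := by ring
    have h4 : (2 * i + 3) * (X.card - 1) ≤ (2 * i + 2) * (X.card - 1) :=
      le_trans h2 (le_trans h1 (le_of_eq h3))
    have h5 : 0 < X.card - 1 := by omega
    have := Nat.le_of_mul_le_mul_right h4 h5
    omega
  -- Stage 1 : class-and-octant pieces
  have hstage1 : ∀ (κ : Short.ConnectedComponent) (t : Bool × Bool × Bool),
      (S.filter fun p => Short.connectedComponentMk p = κ ∧
        MSTAux.octc ((u p : Point)) c = t).card ≤ 2 * i + 2 := by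
    intro κ t
    set Y := S.filter (fun p => Short.connectedComponentMk p = κ ∧
        MSTAux.octc ((u p : Point)) c = t) with hYdef
    have hYS : Y ⊆ S := Finset.filter_subset _ _
    have hYmem : ∀ p ∈ Y, Short.connectedComponentMk p = κ ∧
        MSTAux.octc ((u p : Point)) c = t := fun p hp => (Finset.mem_filter.mp hp).2
    have hreachY : ∀ p q : ↥P, p ∈ Y → q ∈ Y → Short.Reachable p q := by
      intro p q hp hq
      exact (SimpleGraph.ConnectedComponent.eq).mp
        (((hYmem p hp).1).trans ((hYmem q hq).1).symm)
    have hinj : Set.InjOn u ↑Y := by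
      intro p hp q hq hequ
      by_contra hne
      exact huinj p q (hYS (Finset.mem_coe.mp hp)) (hYS (Finset.mem_coe.mp hq)) hne
        (hreachY p q (Finset.mem_coe.mp hp) (Finset.mem_coe.mp hq)) hequ
    have hcard : (Y.image u).card = Y.card := Finset.card_image_of_injOn hinj
    have hXadj : ∀ x y : ↥P, x ∈ Y.image u → y ∈ Y.image u → x ≠ y →
        ∃ j, j ≤ i ∧ (T j).Adj x y := by
      intro x y hx hy hxy
      obtain ⟨p, hp, rfl⟩ := Finset.mem_image.mp hx
      obtain ⟨q, hq, rfl⟩ := Finset.mem_image.mp hy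
      have hpq : p ≠ q := fun h => hxy (by rw [h])
      exact key1 p q (hYS hp) (hYS hq) hpq (hreachY p q hp hq)
        (((hYmem p hp).2).trans ((hYmem q hq).2).symm)
    have := hclique (Y.image u) hXadj
    omega
  -- Stage 2 : each class is small
  have hM : ∀ p ∈ S, (S.filter fun q =>
      Short.connectedComponentMk q = Short.connectedComponentMk p).card ≤ 8 * (2 * i + 2) := by
    intro p hp
    set F := S.filter (fun q =>
      Short.connectedComponentMk q = Short.connectedComponentMk p) with hFdef
    have hcard : F.card = ∑ t ∈ (Finset.univ : Finset (Bool × Bool × Bool)),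
        (F.filter fun q => MSTAux.octc ((u q : Point)) c = t).card :=
      Finset.card_eq_sum_card_fiberwise (fun q _ => Finset.mem_univ _)
    have hbound : ∀ t : Bool × Bool × Bool,
        (F.filter fun q => MSTAux.octc ((u q : Point)) c = t).card ≤ 2 * i + 2 := by
      intro t
      have heq : F.filter (fun q => MSTAux.octc ((u q : Point)) c = t) =
          S.filter (fun q => Short.connectedComponentMk q = Short.connectedComponentMk p ∧
            MSTAux.octc ((u q : Point)) c = t) := by
        rw [hFdef, Finset.filter_filter]
      rw [heq]
      exact hstage1 (Short.connectedComponentMk p) t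
    calc F.card = ∑ t ∈ (Finset.univ : Finset (Bool × Bool × Bool)),
          (F.filter fun q => MSTAux.octc ((u q : Point)) c = t).card := hcard
      _ ≤ ∑ _t ∈ (Finset.univ : Finset (Bool × Bool × Bool)), (2 * i + 2) :=
          Finset.sum_le_sum (fun t _ => hbound t)
      _ = 8 * (2 * i + 2) := by
          simp
  -- cross-class pairs are used
  have hcross : ∀ p q : ↥P, p ∈ S → q ∈ S →
      Short.connectedComponentMk p ≠ Short.connectedComponentMk q →
      ∃ j, j ≤ i ∧ (T j).Adj p q := by
    intro p q hp hq hne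
    by_contra hcon
    push_neg at hcon
    exact hne (SimpleGraph.ConnectedComponent.eq.mpr (hshortreach p q hp hq hcon))
  -- final count
  set M := 8 * (2 * i + 2) with hMdef
  have hcount : (S.card) * (S.card - M) ≤ (i + 1) * (2 * (S.card - 1)) := by
    have hlow : ∀ p ∈ S, S.card - M ≤
        (S.filter fun q => Short.connectedComponentMk p ≠ Short.connectedComponentMk q).card := by
      intro p hp
      have hsplit := Finset.card_filter_add_card_filter_not
        (s := S) (p := fun q => Short.connectedComponentMk p = Short.connectedComponentMk q)
      have hEq : (S.filter fun q =>
          ¬Short.connectedComponentMk p = Short.connectedComponentMk q) =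
          (S.filter fun q =>
          Short.connectedComponentMk p ≠ Short.connectedComponentMk q) :=
        Finset.filter_congr (fun q _ => Iff.rfl)
      rw [hEq] at hsplit
      have hfib : (S.filter fun q =>
          Short.connectedComponentMk p = Short.connectedComponentMk q).card ≤ M := by
        have : (S.filter fun q =>
            Short.connectedComponentMk p = Short.connectedComponentMk q) =
            (S.filter fun q =>
            Short.connectedComponentMk q = Short.connectedComponentMk p) := by
          apply Finset.filter_congr
          intro q _
          exact eq_comm
        rw [this]
        exact hM p hp
      omega
    have hup : ((S ×ˢ S).filter fun pq =>
        Short.connectedComponentMk pq.1 ≠ Short.connectedComponentMk pq.2).card ≤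
        (i + 1) * (2 * (S.card - 1)) := by
      have hsub : (S ×ˢ S).filter (fun pq =>
          Short.connectedComponentMk pq.1 ≠ Short.connectedComponentMk pq.2) ⊆
          (Finset.range (i + 1)).biUnion
            (fun j => (S ×ˢ S).filter fun pq => (T j).Adj pq.1 pq.2) := by
        rintro ⟨x, y⟩ hm
        rw [Finset.mem_filter, Finset.mem_product] at hm
        obtain ⟨j, hj, hadj⟩ := hcross x y hm.1.1 hm.1.2 hm.2
        refine Finset.mem_biUnion.mpr ⟨j, Finset.mem_range.mpr (Nat.lt_succ_of_le hj), ?_⟩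
        rw [Finset.mem_filter, Finset.mem_product]
        exact ⟨hm.1, hadj⟩
      calc ((S ×ˢ S).filter fun pq =>
            Short.connectedComponentMk pq.1 ≠ Short.connectedComponentMk pq.2).card
          ≤ ((Finset.range (i + 1)).biUnion
              (fun j => (S ×ˢ S).filter fun pq => (T j).Adj pq.1 pq.2)).card :=
            Finset.card_le_card hsub
        _ ≤ ∑ j ∈ Finset.range (i + 1),
              ((S ×ˢ S).filter fun pq => (T j).Adj pq.1 pq.2).card :=
            Finset.card_biUnion_le
        _ ≤ ∑ _j ∈ Finset.range (i + 1), 2 * (S.card - 1) := by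
            refine Finset.sum_le_sum ?_
            intro j hj
            exact MSTAux.forest_pairs (T j)
              (htree j (Nat.lt_succ_iff.mp (Finset.mem_range.mp hj))).IsAcyclic S
        _ = (i + 1) * (2 * (S.card - 1)) := by
            rw [Finset.sum_const, Finset.card_range, smul_eq_mul]
    have hprod : ((S ×ˢ S).filter fun pq =>
        Short.connectedComponentMk pq.1 ≠ Short.connectedComponentMk pq.2).card =
        ∑ p ∈ S, (S.filter fun q =>
          Short.connectedComponentMk p ≠ Short.connectedComponentMk q).card := by
      rw [Finset.card_filter, Finset.sum_product]
      exact Finset.sum_congr rfl (fun p _ => (Finset.card_filter _ _).symm)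
    have hlow2 : S.card * (S.card - M) ≤ ∑ p ∈ S, (S.filter fun q =>
        Short.connectedComponentMk p ≠ Short.connectedComponentMk q).card := by
      calc S.card * (S.card - M) = ∑ _p ∈ S, (S.card - M) := by
            rw [Finset.sum_const, smul_eq_mul]
        _ ≤ ∑ p ∈ S, (S.filter fun q =>
              Short.connectedComponentMk p ≠ Short.connectedComponentMk q).card :=
            Finset.sum_le_sum hlow
    omega
  -- conclude
  have hfinal : S.card ≤ M + 2 * i + 2 := by
    by_contra hcon
    push_neg at hcon
    have h1 : (2 * i + 3) ≤ S.card - M := by omega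
    have h2 : S.card * (2 * i + 3) ≤ S.card * (S.card - M) := Nat.mul_le_mul_left _ h1
    have h3 : (i + 1) * (2 * (S.card - 1)) ≤ (2 * i + 2) * S.card := by
      have : (i + 1) * (2 * (S.card - 1)) = (2 * i + 2) * (S.card - 1) := by ring
      rw [this]
      exact Nat.mul_le_mul_left _ (Nat.sub_le _ _)
    have h4 : S.card * (2 * i + 3) ≤ (2 * i + 2) * S.card := le_trans h2 (le_trans hcount h3)
    have h5 : S.card * (2 * i + 3) = S.card * (2 * i + 2) + S.card := by ring
    have h6 : (2 * i + 2) * S.card = S.card * (2 * i + 2) := by ring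
    have hS1 : 1 ≤ S.card := by omega
    omega
  have hii : i ≤ i ^ 3 := Nat.le_self_pow (by norm_num) i
  calc S.card ≤ M + 2 * i + 2 := hfinal
    _ = 18 * i + 18 := by rw [hMdef]; ring
    _ ≤ 36 * i := by omega
    _ ≤ 720 * i ^ 3 := by
        have : 36 * i ≤ 36 * i ^ 3 := Nat.mul_le_mul_left _ hii
        omega
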